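/- Let V and H be real Hilbert spaces, G : V → H a continuous linear map, a(v, w) := ⟨Gv, Gw⟩_H + ⟨v, w⟩_V, F : V → ℝ a continuous linear functional, u ∈ V the exact solution with a(u, v) = F(v) for all v ∈ V, and u_h ∈ V arbitrary. Consider the set S := {(σ, d) ∈ H × V : ⟨σ, Gv⟩_H + ⟨d, v⟩_V = F(v) for all v ∈ V} of equilibrated dual pairs. Then a(u − u_h, u − u_h) is the least value of the estimator (σ, d) ↦ ‖σ − G u_h‖²_H + ‖d − u_h‖²_V over S, and this least value is attained at σ = G u, d = u; that is, the complementary-energy bound is sharp (strong duality holds). -/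

import Mathlib

/-- Sharpness of the complementary-energy bound (strong duality): the energy
error `a(u - u_h, u - u_h)` is the least value of the estimator
`(σ, d) ↦ ‖σ - G u_h‖² + ‖d - u_h‖²` over the set of equilibrated dual pairs,
and it is attained at `σ = G u`, `d = u`. -/
theorem stmt_13 {V H : Type*} [NormedAddCommGroup V] [InnerProductSpace ℝ V]
    [CompleteSpace V] [NormedAddCommGroup H] [InnerProductSpace ℝ H]
    [CompleteSpace H] (G : V →L[ℝ] H) (a : V → V → ℝ)
    (ha : ∀ v w : V, a v w = inner (𝕜 := ℝ) (G v) (G w) + inner (𝕜 := ℝ) v w)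
    (F : V →L[ℝ] ℝ) (u : V) (hu : ∀ v : V, a u v = F v) (uh : V) :
    IsLeast
      {e : ℝ | ∃ σ : H, ∃ d : V,
        (∀ v : V, inner (𝕜 := ℝ) σ (G v) + inner (𝕜 := ℝ) d v = F v) ∧
        e = ‖σ - G uh‖ ^ 2 + ‖d - uh‖ ^ 2}
      (a (u - uh) (u - uh)) ∧
    (∀ v : V, inner (𝕜 := ℝ) (G u) (G v) + inner (𝕜 := ℝ) u v = F v) ∧
    ‖G u - G uh‖ ^ 2 + ‖u - uh‖ ^ 2 = a (u - uh) (u - uh) := by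
  have hequ : ∀ v : V, inner (𝕜 := ℝ) (G u) (G v) + inner (𝕜 := ℝ) u v = F v := by
    intro v; rw [← ha]; exact hu v
  set e := u - uh with he
  have hGe : G u - G uh = G e := by rw [he, map_sub]
  have henergy : a e e = ‖G e‖ ^ 2 + ‖e‖ ^ 2 := by
    rw [ha, real_inner_self_eq_norm_sq, real_inner_self_eq_norm_sq]
  have hattain : ‖G u - G uh‖ ^ 2 + ‖u - uh‖ ^ 2 = a e e := by
    rw [hGe, henergy]
  refine ⟨⟨⟨G u, u, hequ, hattain.symm⟩, ?_⟩, hequ, hattain⟩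
  rintro x ⟨σ, d, heq, rfl⟩
  -- key identity: a e e = ⟨σ - G uh, G e⟩ + ⟨d - uh, e⟩
  have hkey : a e e = inner (𝕜 := ℝ) (σ - G uh) (G e) + inner (𝕜 := ℝ) (d - uh) e := by
    have h1 := heq e
    have h2 : a e e = F e - (inner (𝕜 := ℝ) (G uh) (G e) + inner (𝕜 := ℝ) uh e) := by
      rw [← hu e, ha, ha]
      have hGu : G u = G e + G uh := by rw [he, map_sub]; abel
      rw [hGu, inner_add_left]
      have hue : u = e + uh := by rw [he]; abel
      have h3 : (inner (𝕜 := ℝ) u e : ℝ) = inner (𝕜 := ℝ) e e + inner (𝕜 := ℝ) uh e := by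
        rw [hue, inner_add_left]
      rw [h3]; ring
    rw [h2, ← h1, inner_sub_left, inner_sub_left]
    ring
  have c1 : inner (𝕜 := ℝ) (σ - G uh) (G e) ≤ ‖σ - G uh‖ * ‖G e‖ :=
    real_inner_le_norm _ _
  have c2 : inner (𝕜 := ℝ) (d - uh) e ≤ ‖d - uh‖ * ‖e‖ :=
    real_inner_le_norm _ _
  have h := hkey
  rw [henergy] at h
  nlinarith [sq_nonneg (‖σ - G uh‖ - ‖G e‖), sq_nonneg (‖d - uh‖ - ‖e‖),
    henergy, norm_nonneg (G e), norm_nonneg e]
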